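/- Let K, M, l be natural numbers with M ≥ 1 and (l+1)·M ≤ K, let S_1, …, S_{l+1} be pairwise disjoint subsets of Fin K each of cardinality M, let Δ be a uniformly distributed random variable on Fin K, and let W_j = 1 if Δ ∈ S_j and W_j = 0 otherwise, for j = 1, …, l+1. Then the mutual information satisfies I(W_{l+1}; (W_1, …, W_l)) = H2(M/K) − (1 − l·M/K) · H2(M/(K − l·M)). -/

import Mathlib

open MeasureTheory Real

/-- Shannon entropy (in nats) of a random variable `X` with values in a finite type:
`H(X) = ∑ₓ negMulLog (P(X = x))`. -/
noncomputable def entropy {Ω : Type*} [MeasurableSpace Ω] (P : Measure Ω)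
    {α : Type*} [Fintype α] (X : Ω → α) : ℝ :=
  ∑ x : α, Real.negMulLog (P (X ⁻¹' {x})).toReal

/-- Mutual information `I(X ; Y) = H(X) + H(Y) - H((X,Y))`. -/
noncomputable def mutualInfo {Ω : Type*} [MeasurableSpace Ω] (P : Measure Ω)
    {α β : Type*} [Fintype α] [Fintype β] (X : Ω → α) (Y : Ω → β) : ℝ :=
  entropy P X + entropy P Y - entropy P (fun ω => (X ω, Y ω))

-- helper 1: measure of finset preimage
lemma meas_finset {Ω : Type*} [MeasurableSpace Ω] (P : Measure Ω) [IsProbabilityMeasure P]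
    {K : ℕ} (hK : K ≠ 0) (Δ : Ω → Fin K)
    (hunif : ∀ x : Fin K, P (Δ ⁻¹' {x}) = (K : ENNReal)⁻¹)
    (T : Finset (Fin K)) :
    (P (Δ ⁻¹' ↑T)).toReal = (T.card : ℝ) / K := by
  have hKtop : ((K : ENNReal))⁻¹ ≠ ⊤ := by simp [hK]
  have hub : ∀ (U : Finset (Fin K)), P (Δ ⁻¹' ↑U) ≤ (U.card : ENNReal) * (K : ENNReal)⁻¹ := by
    intro U
    have : Δ ⁻¹' ↑U = ⋃ x ∈ U, Δ ⁻¹' {x} := by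
      ext ω; simp
    rw [this]
    calc P (⋃ x ∈ U, Δ ⁻¹' {x}) ≤ ∑ x ∈ U, P (Δ ⁻¹' {x}) := measure_biUnion_finset_le _ _
      _ = (U.card : ENNReal) * (K : ENNReal)⁻¹ := by simp [hunif, mul_comm]
  have hcover : (1 : ENNReal) ≤ P (Δ ⁻¹' ↑T) + P (Δ ⁻¹' ↑Tᶜ) := by
    have : (Δ ⁻¹' ↑T) ∪ (Δ ⁻¹' ↑Tᶜ) = Set.univ := by
      ext ω; by_cases h : Δ ω ∈ T <;> simp [h]
    calc (1 : ENNReal) = P Set.univ := (measure_univ).symm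
      _ = P ((Δ ⁻¹' ↑T) ∪ (Δ ⁻¹' ↑Tᶜ)) := by rw [this]
      _ ≤ _ := measure_union_le _ _
  have hsum : (T.card : ENNReal) * (K : ENNReal)⁻¹ + (Tᶜ.card : ENNReal) * (K : ENNReal)⁻¹ = 1 := by
    rw [← add_mul]
    have : (T.card : ENNReal) + (Tᶜ.card : ENNReal) = (K : ENNReal) := by
      rw [← Nat.cast_add, Finset.card_add_card_compl]; simp
    rw [this, ENNReal.mul_inv_cancel (by simpa using hK) (by simp)]
  have hle : P (Δ ⁻¹' ↑T) = (T.card : ENNReal) * (K : ENNReal)⁻¹ := by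
    refine le_antisymm (hub T) ?_
    have h1 : (T.card : ENNReal) * (K : ENNReal)⁻¹ + (Tᶜ.card : ENNReal) * (K : ENNReal)⁻¹
        ≤ P (Δ ⁻¹' ↑T) + (Tᶜ.card : ENNReal) * (K : ENNReal)⁻¹ := by
      rw [hsum]
      exact hcover.trans (add_le_add (le_refl _) (hub Tᶜ))
    exact (ENNReal.add_le_add_iff_right (by
      exact ENNReal.mul_ne_top (by simp) hKtop)).mp h1
  rw [hle, ENNReal.toReal_mul, ENNReal.toReal_inv]
  simp [div_eq_mul_inv]

lemma entropy_equiv {Ω : Type*} [MeasurableSpace Ω] (P : Measure Ω)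
    {α β : Type*} [Fintype α] [Fintype β] (e : α ≃ β) (X : Ω → α) :
    entropy P (fun ω => e (X ω)) = entropy P X := by
  unfold entropy
  rw [← e.sum_comp (fun b => Real.negMulLog (P ((fun ω => e (X ω)) ⁻¹' {b})).toReal)]
  refine Finset.sum_congr rfl fun a _ => ?_
  have : (fun ω => e (X ω)) ⁻¹' {e a} = X ⁻¹' {a} := by ext ω; simp
  rw [this]

-- counting entropy lemma
lemma entropy_indicators {Ω : Type*} [MeasurableSpace Ω] (P : Measure Ω) [IsProbabilityMeasure P]
    {K M : ℕ} (hK : K ≠ 0) (Δ : Ω → Fin K)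
    (hunif : ∀ x : Fin K, P (Δ ⁻¹' {x}) = (K : ENNReal)⁻¹)
    (n : ℕ) (T : Fin n → Finset (Fin K))
    (hcard : ∀ j, (T j).card = M)
    (hdisj : ∀ i j, i ≠ j → Disjoint (T i) (T j))
    (hn : n * M ≤ K) :
    entropy P (fun ω => fun j : Fin n => if Δ ω ∈ T j then (1 : Fin 2) else 0)
      = Real.negMulLog (((K : ℝ) - n * M) / K) + n * Real.negMulLog ((M : ℝ) / K) := by
  classical
  set g : Fin K → (Fin n → Fin 2) := fun x j => if x ∈ T j then 1 else 0 with hg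
  have hpre : ∀ v : Fin n → Fin 2,
      (fun ω => fun j : Fin n => if Δ ω ∈ T j then (1 : Fin 2) else 0) ⁻¹' {v}
        = Δ ⁻¹' ↑(Finset.univ.filter (fun x => g x = v)) := by
    intro v; ext ω; simp [hg]
  have hmeas : ∀ v : Fin n → Fin 2,
      (P ((fun ω => fun j : Fin n => if Δ ω ∈ T j then (1 : Fin 2) else 0) ⁻¹' {v})).toReal
        = ((Finset.univ.filter (fun x => g x = v)).card : ℝ) / K := by
    intro v; rw [hpre v]; exact meas_finset P hK Δ hunif _
  -- cardinalities
  have hinT : ∀ (x : Fin K) (j : Fin n), g x j = 1 ↔ x ∈ T j := by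
    intro x j
    by_cases h : x ∈ T j <;> simp [hg, h]
  have hzero : (Finset.univ.filter (fun x => g x = 0)).card = K - n * M := by
    have : Finset.univ.filter (fun x => g x = 0) = (Finset.univ.biUnion T)ᶜ := by
      ext x
      simp only [Finset.mem_filter, Finset.mem_univ, true_and, Finset.mem_compl,
        Finset.mem_biUnion, not_exists]
      constructor
      · intro h j hx
        have := congrFun h j
        simp [hg, hx] at this
      · intro h
        funext j
        simp [hg, h j]
    rw [this, Finset.card_compl]
    congr 1
    · simp
    rw [Finset.card_biUnion (fun i _ j _ hij => hdisj i j hij)]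
    simp [hcard, mul_comm]
  have hsingle : ∀ j : Fin n,
      Finset.univ.filter (fun x => g x = Pi.single j 1) = T j := by
    intro j
    ext x
    simp only [Finset.mem_filter, Finset.mem_univ, true_and]
    constructor
    · intro h
      have := congrFun h j
      rw [Pi.single_eq_same] at this
      exact (hinT x j).1 this
    · intro hx
      funext j'
      by_cases hjj : j' = j
      · subst hjj; simp [hg, hx]
      · rw [Pi.single_eq_of_ne hjj]
        have : x ∉ T j' := fun hx' =>
          Finset.disjoint_left.mp (hdisj j' j hjj) hx' hx
        simp [hg, this]
  have hother : ∀ v : Fin n → Fin 2, v ≠ 0 → (∀ j, v ≠ Pi.single j 1) →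
      Finset.univ.filter (fun x => g x = v) = ∅ := by
    intro v hv0 hvs
    have fin2 : ∀ a : Fin 2, a = 0 ∨ a = 1 := by decide
    obtain ⟨j, hj⟩ : ∃ j, v j = 1 := by
      by_contra h
      push_neg at h
      exact hv0 (funext fun j => (fin2 (v j)).resolve_right (h j))
    obtain ⟨j', hj', hjj'⟩ : ∃ j', v j' = 1 ∧ j' ≠ j := by
      by_contra h
      push_neg at h
      refine hvs j (funext fun j' => ?_)
      by_cases hc : j' = j
      · subst hc; simp [hj]
      · rw [Pi.single_eq_of_ne hc]
        have hv' : v j' ≠ 1 := fun hh => hc (h j' hh)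
        exact (fin2 (v j')).resolve_right hv'
    rw [Finset.eq_empty_iff_forall_notMem]
    intro x hx
    rw [Finset.mem_filter] at hx
    have h1 : x ∈ T j := (hinT x j).1 (by rw [hx.2]; exact hj)
    have h2 : x ∈ T j' := (hinT x j').1 (by rw [hx.2]; exact hj')
    exact Finset.disjoint_left.mp (hdisj j' j hjj') h2 h1
  -- sum
  unfold entropy
  rw [Finset.sum_congr rfl (fun v _ => by rw [hmeas v])]
  set A : Finset (Fin n → Fin 2) :=
    insert 0 (Finset.univ.image (fun j : Fin n => Pi.single j (1 : Fin 2))) with hA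
  rw [← Finset.sum_subset (Finset.subset_univ A) (fun v _ hv => ?_)]
  · have h0A : (0 : Fin n → Fin 2) ∉ Finset.univ.image (fun j : Fin n => Pi.single j (1 : Fin 2)) := by
      simp only [Finset.mem_image, Finset.mem_univ, true_and, not_exists]
      intro j h
      have := congrFun h j
      simp at this
    rw [hA, Finset.sum_insert h0A, Finset.sum_image (fun i _ j _ h => ?_)]
    · rw [hzero]
      have : ((K - n * M : ℕ) : ℝ) = (K : ℝ) - n * M := by
        push_cast [Nat.cast_sub hn]; ring
      rw [this]
      congr 1
      rw [Finset.sum_congr rfl (fun j _ => by rw [hsingle j, hcard j])]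
      simp [mul_comm]
    · by_contra hij
      have := congrFun h i
      rw [Pi.single_eq_same, Pi.single_eq_of_ne hij] at this
      exact one_ne_zero this
  · have hv0 : v ≠ 0 := fun h => hv (by simp [hA, h])
    have hvs : ∀ j, v ≠ Pi.single j 1 := by
      intro j h
      subst h
      exact hv (Finset.mem_insert_of_mem (Finset.mem_image_of_mem _ (Finset.mem_univ j)))
    rw [hother v hv0 hvs]
    simp [Real.negMulLog_zero]

lemma negMulLog_div_scale (x c : ℝ) (hx : 0 ≤ x) (hc : 0 < c) :
    Real.negMulLog (x / c) = (Real.negMulLog x + x * Real.log c) / c := by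
  rcases hx.eq_or_lt with h | h
  · simp [← h, Real.negMulLog_zero]
  · rw [Real.negMulLog, Real.negMulLog, Real.log_div h.ne' hc.ne']
    field_simp
    ring

theorem aux_mutualInfo_disjoint_indicators
    (Ω : Type*) [Fintype Ω] [MeasurableSpace Ω] (P : Measure Ω) [IsProbabilityMeasure P]
    (K M l : ℕ) (hM : 1 ≤ M) (hlM : (l + 1) * M ≤ K)
    (S : Fin (l + 1) → Finset (Fin K))
    (hcard : ∀ j, (S j).card = M)
    (hdisj : ∀ i j, i ≠ j → Disjoint (S i) (S j))
    (Δ : Ω → Fin K)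
    (hunif : ∀ x : Fin K, P (Δ ⁻¹' {x}) = (K : ENNReal)⁻¹) :
    (entropy P (fun ω => if Δ ω ∈ S (Fin.last l) then (1 : Fin 2) else 0)
      + entropy P (fun ω => fun j : Fin l => if Δ ω ∈ S j.castSucc then (1 : Fin 2) else 0)
      - entropy P (fun ω => ((if Δ ω ∈ S (Fin.last l) then (1 : Fin 2) else 0),
          fun j : Fin l => if Δ ω ∈ S j.castSucc then (1 : Fin 2) else 0)))
      = Real.binEntropy ((M : ℝ) / K)
        - (1 - (l : ℝ) * M / K) * Real.binEntropy ((M : ℝ) / ((K : ℝ) - l * M)) := by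
  classical
  have hMlM : M ≤ (l + 1) * M := Nat.le_mul_of_pos_left M (Nat.succ_pos l)
  have hK0 : K ≠ 0 := by omega
  have hMK : M ≤ K := le_trans hMlM hlM
  -- entropy of W
  have hW : entropy P (fun ω => if Δ ω ∈ S (Fin.last l) then (1 : Fin 2) else 0)
      = Real.negMulLog (((K : ℝ) - M) / K) + Real.negMulLog ((M : ℝ) / K) := by
    unfold entropy
    rw [Fin.sum_univ_two]
    have h1 : (fun ω => if Δ ω ∈ S (Fin.last l) then (1 : Fin 2) else 0) ⁻¹' {1}
        = Δ ⁻¹' ↑(S (Fin.last l)) := by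
      ext ω; by_cases h : Δ ω ∈ S (Fin.last l) <;> simp [h]
    have h0 : (fun ω => if Δ ω ∈ S (Fin.last l) then (1 : Fin 2) else 0) ⁻¹' {0}
        = Δ ⁻¹' ↑((S (Fin.last l))ᶜ) := by
      ext ω; by_cases h : Δ ω ∈ S (Fin.last l) <;> simp [h]
    rw [h0, h1, meas_finset P hK0 Δ hunif, meas_finset P hK0 Δ hunif,
      Finset.card_compl, hcard, Fintype.card_fin]
    rw [Nat.cast_sub hMK]
  -- entropy of V
  have hV : entropy P (fun ω => fun j : Fin l => if Δ ω ∈ S j.castSucc then (1 : Fin 2) else 0)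
      = Real.negMulLog (((K : ℝ) - l * M) / K) + l * Real.negMulLog ((M : ℝ) / K) := by
    exact entropy_indicators P hK0 Δ hunif l (fun j => S j.castSucc)
      (fun j => hcard _)
      (fun i j hij => hdisj _ _ (fun h => hij (Fin.castSucc_injective _ h)))
      (le_trans (Nat.mul_le_mul_right M (Nat.le_succ l)) hlM)
  -- entropy of the pair via the full vector
  have hU : entropy P (fun ω => fun j : Fin (l + 1) => if Δ ω ∈ S j then (1 : Fin 2) else 0)
      = Real.negMulLog (((K : ℝ) - (l + 1) * M) / K) + (l + 1) * Real.negMulLog ((M : ℝ) / K) := by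
    have := entropy_indicators P hK0 Δ hunif (l + 1) S hcard hdisj hlM
    rw [this]; push_cast; ring
  have hpair : entropy P (fun ω => ((if Δ ω ∈ S (Fin.last l) then (1 : Fin 2) else 0),
          fun j : Fin l => if Δ ω ∈ S j.castSucc then (1 : Fin 2) else 0))
      = entropy P (fun ω => fun j : Fin (l + 1) => if Δ ω ∈ S j then (1 : Fin 2) else 0) := by
    let e2 : (Fin (l + 1) → Fin 2) ≃ (Fin 2 × (Fin l → Fin 2)) :=
      { toFun := fun u => (u (Fin.last l), fun j => u j.castSucc)
        invFun := fun p => Fin.snoc p.2 p.1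
        left_inv := fun u => by
          funext j
          refine Fin.lastCases ?_ ?_ j
          · simp
          · intro i; simp
        right_inv := fun p => by
          refine Prod.ext ?_ ?_
          · simp
          · funext j; simp }
    exact entropy_equiv P e2 (fun ω => fun j : Fin (l + 1) => if Δ ω ∈ S j then (1 : Fin 2) else 0)
  rw [hW, hV, hpair, hU]
  -- real algebra
  rw [Real.binEntropy_eq_negMulLog_add_negMulLog_one_sub,
    Real.binEntropy_eq_negMulLog_add_negMulLog_one_sub]
  have hk : (0 : ℝ) < K := by exact_mod_cast Nat.pos_of_ne_zero hK0
  have hm : (0 : ℝ) < M := by exact_mod_cast hM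
  have hlm : ((l : ℝ) + 1) * M ≤ K := by exact_mod_cast hlM
  have hd : (0 : ℝ) < (K : ℝ) - l * M := by nlinarith
  have he : (0 : ℝ) ≤ (K : ℝ) - ((l : ℝ) + 1) * M := by linarith
  have hkm : (0 : ℝ) ≤ (K : ℝ) - M := by nlinarith
  have h1 : 1 - (M : ℝ) / K = ((K : ℝ) - M) / K := by field_simp
  have h2 : 1 - (M : ℝ) / ((K : ℝ) - l * M)
      = ((K : ℝ) - ((l : ℝ) + 1) * M) / ((K : ℝ) - l * M) := by
    rw [one_sub_div hd.ne']; ring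
  have h3 : 1 - (l : ℝ) * M / K = ((K : ℝ) - l * M) / K := by field_simp
  rw [h1, h2, h3]
  rw [negMulLog_div_scale _ _ hkm hk, negMulLog_div_scale _ _ hm.le hk,
      negMulLog_div_scale ((K : ℝ) - l * M) _ hd.le hk, negMulLog_div_scale _ _ he hk,
      negMulLog_div_scale _ _ hm.le hd, negMulLog_div_scale _ _ he hd]
  simp only [Real.negMulLog]
  field_simp [hd.ne']
  rw [mul_div_cancel_left₀ _ (by rw [mul_comm]; exact hd.ne')]
  ring


/-- **Mutual information of one more disjoint search indicator.** Let `Δ` be uniform on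
`Fin K`, and let `S 1, …, S (l+1)` be pairwise disjoint subsets of `Fin K`, each of
cardinality `M ≥ 1`, with `(l+1)·M ≤ K`. With `W j = 1` iff `Δ ∈ S j`,
`I(W_{l+1} ; (W_1, …, W_l)) = H₂(M/K) - (1 - l·M/K) · H₂(M/(K - l·M))`. -/
theorem mutualInfo_disjoint_indicators
    (Ω : Type*) [Fintype Ω] [MeasurableSpace Ω] (P : Measure Ω) [IsProbabilityMeasure P]
    (K M l : ℕ) (hM : 1 ≤ M) (hlM : (l + 1) * M ≤ K)
    (S : Fin (l + 1) → Finset (Fin K))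
    (hcard : ∀ j, (S j).card = M)
    (hdisj : ∀ i j, i ≠ j → Disjoint (S i) (S j))
    (Δ : Ω → Fin K)
    (hunif : ∀ x : Fin K, P (Δ ⁻¹' {x}) = (K : ENNReal)⁻¹) :
    mutualInfo P (fun ω => if Δ ω ∈ S (Fin.last l) then (1 : Fin 2) else 0)
        (fun ω => fun j : Fin l => if Δ ω ∈ S j.castSucc then (1 : Fin 2) else 0)
      = Real.binEntropy ((M : ℝ) / K)
        - (1 - (l : ℝ) * M / K) * Real.binEntropy ((M : ℝ) / ((K : ℝ) - l * M)) := by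
  exact aux_mutualInfo_disjoint_indicators Ω P K M l hM hlM S hcard hdisj Δ hunif
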